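/- Let r ≥ 1 be an integer, k ≥ 1, let p_1, …, p_k be positive integers, and let α be a positive rational number such that ∑_{i=1}^k 1/p_i + 1/α = 1/r and α ≥ max{p_1, …, p_k}. Then α ≤ u_{k+1}(r) − 1 and p_1·p_2⋯p_k·(α + 1) ≤ u_1(r)·u_2(r)⋯u_{k+1}(r). -/

import Mathlib

set_option maxHeartbeats 1000000

open Finset


private def Useq (r : ℤ) : ℕ → ℤ
  | 0 => 1
  | n + 1 => Useq r n * (r * Useq r n + 1)

private lemma Useq_one_le (r : ℤ) (hr : 1 ≤ r) : ∀ n, 1 ≤ Useq r n := by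
  intro n
  induction n with
  | zero => simp [Useq]
  | succ n ih =>
    simp only [Useq]
    have h1 : 1 ≤ r * Useq r n + 1 := by nlinarith
    nlinarith

private lemma inv_anti_le {a b : ℚ} (ha : 0 < a) (hb : 0 < b) (h : a⁻¹ ≤ b⁻¹) : b ≤ a := by
  have h2 : b * a⁻¹ ≤ 1 := by
    rw [← mul_inv_cancel₀ hb.ne']
    exact mul_le_mul_of_nonneg_left h hb.le
  calc b = a * (b * a⁻¹) := by
        rw [mul_comm b a⁻¹, ← mul_assoc, mul_inv_cancel₀ ha.ne', one_mul]
    _ ≤ a * 1 := mul_le_mul_of_nonneg_left h2 ha.le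
    _ = a := mul_one a

private lemma inv_anti_lt {a b : ℚ} (ha : 0 < a) (hb : 0 < b) (h : a⁻¹ < b⁻¹) : b < a := by
  have hle : b ≤ a := inv_anti_le ha hb h.le
  rcases hle.lt_or_eq with h' | h'
  · exact h'
  · subst h'; exact absurd h (lt_irrefl _)

private lemma inv_le_inv_of_le' {a b : ℚ} (ha : 0 < a) (hb : 0 < b) (h : b ≤ a) :
    a⁻¹ ≤ b⁻¹ := by
  by_contra hc
  push_neg at hc
  exact absurd (inv_anti_lt hb ha hc) (not_lt.mpr h)

private lemma inv_lt_inv_of_lt' {a b : ℚ} (hb : 0 < b) (h : b < a) : a⁻¹ < b⁻¹ := by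
  have ha : 0 < a := lt_trans hb h
  by_contra hc
  push_neg at hc
  exact absurd (inv_anti_le hb ha hc) (not_le.mpr h)

private lemma ms_card_le_sum (s : Multiset ℤ) (h : ∀ x ∈ s, (1:ℤ) ≤ x) :
    (s.card : ℤ) ≤ s.sum := by
  induction s using Multiset.induction_on with
  | empty => simp
  | cons a t ih =>
    simp only [Multiset.sum_cons, Multiset.card_cons]
    have ha := h a (Multiset.mem_cons_self a t)
    have ht := ih (fun x hx => h x (Multiset.mem_cons_of_mem hx))
    push_cast
    linarith

private lemma ms_one_le_prod (s : Multiset ℤ) (h : ∀ x ∈ s, (1:ℤ) ≤ x) :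
    1 ≤ s.prod := by
  induction s using Multiset.induction_on with
  | empty => simp
  | cons a t ih =>
    simp only [Multiset.prod_cons]
    have ha := h a (Multiset.mem_cons_self a t)
    have ht := ih (fun x hx => h x (Multiset.mem_cons_of_mem hx))
    nlinarith

private lemma ms_sum_inv_nonneg (s : Multiset ℤ) (h : ∀ x ∈ s, (1:ℤ) ≤ x) :
    0 ≤ (s.map fun x : ℤ => ((x:ℚ))⁻¹).sum := by
  induction s using Multiset.induction_on with
  | empty => simp
  | cons a t ih =>
    simp only [Multiset.map_cons, Multiset.sum_cons]
    have ha := h a (Multiset.mem_cons_self a t)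
    have ha' : (0:ℚ) < (a:ℚ) := by exact_mod_cast lt_of_lt_of_le one_pos ha
    have ht := ih (fun x hx => h x (Multiset.mem_cons_of_mem hx))
    have : (0:ℚ) ≤ ((a:ℚ))⁻¹ := by positivity
    linarith

private lemma ms_single_le_sum_inv (s : Multiset ℤ) (h : ∀ x ∈ s, (1:ℤ) ≤ x)
    {x : ℤ} (hx : x ∈ s) :
    ((x:ℚ))⁻¹ ≤ (s.map fun y : ℤ => ((y:ℚ))⁻¹).sum := by
  have hmem : ((x:ℚ))⁻¹ ∈ (s.map fun y : ℤ => ((y:ℚ))⁻¹) :=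
    Multiset.mem_map_of_mem _ hx
  apply Multiset.single_le_sum _ _ hmem
  intro b hb
  obtain ⟨y, hy, rfl⟩ := Multiset.mem_map.mp hb
  have h1 := h y hy
  have : (0:ℚ) < (y:ℚ) := by exact_mod_cast lt_of_lt_of_le one_pos h1
  positivity

private lemma ms_exists_max (s : Multiset ℤ) (hs : s ≠ 0) : ∃ c ∈ s, ∀ x ∈ s, x ≤ c := by
  induction s using Multiset.induction_on with
  | empty => exact absurd rfl hs
  | cons a t ih =>
    rcases eq_or_ne t 0 with rfl | ht
    · refine ⟨a, Multiset.mem_cons_self a 0, ?_⟩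
      intro x hx
      rcases Multiset.mem_cons.mp hx with rfl | hx
      · exact le_rfl
      · simp at hx
    · obtain ⟨c, hc, hmax⟩ := ih ht
      rcases le_total a c with h | h
      · refine ⟨c, Multiset.mem_cons_of_mem hc, ?_⟩
        intro x hx
        rcases Multiset.mem_cons.mp hx with rfl | hx
        · exact h
        · exact hmax x hx
      · refine ⟨a, Multiset.mem_cons_self a t, ?_⟩
        intro x hx
        rcases Multiset.mem_cons.mp hx with rfl | hx
        · exact le_rfl
        · exact (hmax x hx).trans h

private lemma ms_sum_inv_mul_prod (s : Multiset ℤ) (h : ∀ x ∈ s, (1:ℤ) ≤ x) :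
    ∃ N : ℤ, ((s.map fun x : ℤ => ((x:ℚ))⁻¹).sum) * ((s.prod : ℤ) : ℚ) = (N : ℚ) := by
  induction s using Multiset.induction_on with
  | empty => exact ⟨0, by simp⟩
  | cons a t ih =>
    obtain ⟨N, hN⟩ := ih (fun x hx => h x (Multiset.mem_cons_of_mem hx))
    have ha := h a (Multiset.mem_cons_self a t)
    have ha0 : ((a:ℚ)) ≠ 0 := by
      have : (0:ℚ) < (a:ℚ) := by exact_mod_cast lt_of_lt_of_le one_pos ha
      exact this.ne'
    refine ⟨t.prod + a * N, ?_⟩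
    simp only [Multiset.map_cons, Multiset.sum_cons, Multiset.prod_cons, Int.cast_mul,
      Int.cast_add]
    rw [add_mul]
    have h1 : ((a:ℚ))⁻¹ * ((a:ℚ) * ((t.prod : ℤ) : ℚ)) = ((t.prod : ℤ) : ℚ) := by
      rw [← mul_assoc, inv_mul_cancel₀ ha0, one_mul]
    have h2 : ((t.map fun x : ℤ => ((x:ℚ))⁻¹).sum) * ((a:ℚ) * ((t.prod : ℤ) : ℚ))
        = (a:ℚ) * (N : ℚ) := by
      rw [mul_comm (a:ℚ) ((t.prod : ℤ) : ℚ), ← mul_assoc, hN]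
      ring
    rw [h1, h2]

private lemma le_of_inv_mul_int {α X : ℚ} (M : ℤ) (hα : 0 < α) (hX : 0 < X)
    (h : α⁻¹ * X = (M : ℚ)) : α ≤ X := by
  have hM0 : (0:ℚ) < (M:ℚ) := by
    rw [← h]; positivity
  have hM1 : (1:ℚ) ≤ (M:ℚ) := by
    have : 0 < M := by exact_mod_cast hM0
    exact_mod_cast this
  have h1 : 1 ≤ α⁻¹ * X := by rw [h]; exact hM1
  calc α = α * 1 := (mul_one α).symm
    _ ≤ α * (α⁻¹ * X) := mul_le_mul_of_nonneg_left h1 hα.le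
    _ = X := by rw [← mul_assoc, mul_inv_cancel₀ hα.ne', one_mul]

private lemma alpha_le_rP (r : ℤ) (hr : 1 ≤ r) (s : Multiset ℤ) (α : ℚ)
    (h1 : ∀ x ∈ s, (1:ℤ) ≤ x) (hα : 0 < α)
    (heq : (s.map fun x : ℤ => ((x:ℚ))⁻¹).sum + α⁻¹ = ((r:ℚ))⁻¹) :
    α ≤ (r : ℚ) * ((s.prod : ℤ) : ℚ) := by
  obtain ⟨N, hN⟩ := ms_sum_inv_mul_prod s h1
  have hP : (1:ℚ) ≤ ((s.prod : ℤ) : ℚ) := by exact_mod_cast ms_one_le_prod s h1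
  have hPpos : (0:ℚ) < ((s.prod : ℤ) : ℚ) := lt_of_lt_of_le one_pos hP
  have hrq : (0:ℚ) < (r:ℚ) := by exact_mod_cast lt_of_lt_of_le one_pos hr
  have hX : (0:ℚ) < (r:ℚ) * ((s.prod : ℤ) : ℚ) := by positivity
  apply le_of_inv_mul_int (s.prod - r * N) hα hX
  have hαinv : α⁻¹ = ((r:ℚ))⁻¹ - (s.map fun x : ℤ => ((x:ℚ))⁻¹).sum := by linarith
  rw [hαinv, show ((s.prod - r * N : ℤ) : ℚ)
      = ((s.prod : ℤ) : ℚ) - (r:ℚ) * (N:ℚ) from by push_cast; ring]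
  rw [sub_mul]
  have e1 : ((r:ℚ))⁻¹ * ((r:ℚ) * ((s.prod : ℤ) : ℚ)) = ((s.prod : ℤ) : ℚ) := by
    rw [← mul_assoc, inv_mul_cancel₀ hrq.ne', one_mul]
  have e2 : ((s.map fun x : ℤ => ((x:ℚ))⁻¹).sum) * ((r:ℚ) * ((s.prod : ℤ) : ℚ))
      = (r:ℚ) * (N:ℚ) := by
    rw [mul_comm (r:ℚ) ((s.prod : ℤ) : ℚ), ← mul_assoc, hN]; ring
  rw [e1, e2]

private lemma alpha_le_rcP (r c : ℤ) (hr : 1 ≤ r) (hc : 1 ≤ c) (t : Multiset ℤ) (α : ℚ)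
    (h1 : ∀ x ∈ t, (1:ℤ) ≤ x) (hα : 0 < α)
    (heq : ((c:ℚ))⁻¹ + ((c:ℚ))⁻¹ + (t.map fun x : ℤ => ((x:ℚ))⁻¹).sum + α⁻¹ = ((r:ℚ))⁻¹) :
    α ≤ (r : ℚ) * (c:ℚ) * ((t.prod : ℤ) : ℚ) := by
  obtain ⟨N, hN⟩ := ms_sum_inv_mul_prod t h1
  have hP : (1:ℚ) ≤ ((t.prod : ℤ) : ℚ) := by exact_mod_cast ms_one_le_prod t h1
  have hPpos : (0:ℚ) < ((t.prod : ℤ) : ℚ) := lt_of_lt_of_le one_pos hP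
  have hrq : (0:ℚ) < (r:ℚ) := by exact_mod_cast lt_of_lt_of_le one_pos hr
  have hcq : (0:ℚ) < (c:ℚ) := by exact_mod_cast lt_of_lt_of_le one_pos hc
  have hX : (0:ℚ) < (r:ℚ) * (c:ℚ) * ((t.prod : ℤ) : ℚ) := by positivity
  apply le_of_inv_mul_int (c * t.prod - 2 * r * t.prod - r * c * N) hα hX
  have hαinv : α⁻¹ = ((r:ℚ))⁻¹ - ((c:ℚ))⁻¹ - ((c:ℚ))⁻¹
      - (t.map fun x : ℤ => ((x:ℚ))⁻¹).sum := by linarith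
  rw [hαinv, show ((c * t.prod - 2 * r * t.prod - r * c * N : ℤ) : ℚ)
      = (c:ℚ) * ((t.prod : ℤ) : ℚ) - 2 * (r:ℚ) * ((t.prod : ℤ) : ℚ)
        - (r:ℚ) * (c:ℚ) * (N:ℚ) from by push_cast; ring]
  rw [sub_mul, sub_mul, sub_mul]
  have e1 : ((r:ℚ))⁻¹ * ((r:ℚ) * (c:ℚ) * ((t.prod : ℤ) : ℚ))
      = (c:ℚ) * ((t.prod : ℤ) : ℚ) := by
    rw [show (r:ℚ) * (c:ℚ) * ((t.prod : ℤ) : ℚ)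
        = (r:ℚ) * ((c:ℚ) * ((t.prod : ℤ) : ℚ)) from by ring,
      ← mul_assoc, inv_mul_cancel₀ hrq.ne', one_mul]
  have e2 : ((c:ℚ))⁻¹ * ((r:ℚ) * (c:ℚ) * ((t.prod : ℤ) : ℚ))
      = (r:ℚ) * ((t.prod : ℤ) : ℚ) := by
    rw [show (r:ℚ) * (c:ℚ) * ((t.prod : ℤ) : ℚ)
        = (c:ℚ) * ((r:ℚ) * ((t.prod : ℤ) : ℚ)) from by ring,
      ← mul_assoc, inv_mul_cancel₀ hcq.ne', one_mul]
  have e3 : ((t.map fun x : ℤ => ((x:ℚ))⁻¹).sum) * ((r:ℚ) * (c:ℚ) * ((t.prod : ℤ) : ℚ))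
      = (r:ℚ) * (c:ℚ) * (N:ℚ) := by
    rw [show (r:ℚ) * (c:ℚ) * ((t.prod : ℤ) : ℚ)
        = ((t.prod : ℤ) : ℚ) * ((r:ℚ) * (c:ℚ)) from by ring,
      ← mul_assoc, hN]; ring
  rw [e1, e2, e3]; ring

private lemma base_case (r : ℤ) (hr : 1 ≤ r) (q : ℤ) (hq1 : 1 ≤ q) (α : ℚ)
    (hα : 0 < α) (hqα : (q:ℚ) ≤ α)
    (heq : ((q:ℚ))⁻¹ + α⁻¹ = ((r:ℚ))⁻¹) :
    (q:ℚ) * (α + 1) ≤ ((Useq r 2 : ℤ) : ℚ) := by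
  have hRpos : (0:ℚ) < (r:ℚ) := by exact_mod_cast lt_of_lt_of_le one_pos hr
  have hQpos : (0:ℚ) < (q:ℚ) := by exact_mod_cast lt_of_lt_of_le one_pos hq1
  have hαinvpos : 0 < α⁻¹ := by positivity
  have hrq : (r:ℚ) < (q:ℚ) := by
    apply inv_anti_lt hQpos hRpos
    have : ((q:ℚ))⁻¹ < ((q:ℚ))⁻¹ + α⁻¹ := by linarith
    linarith
  have hrqZ : r + 1 ≤ q := by exact_mod_cast Int.add_one_le_iff.mpr (by exact_mod_cast hrq)
  have hq2r : (q:ℚ) ≤ 2 * (r:ℚ) := by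
    have hαq : α⁻¹ ≤ ((q:ℚ))⁻¹ := inv_le_inv_of_le' hα hQpos hqα
    have h2 : ((r:ℚ))⁻¹ ≤ 2 * ((q:ℚ))⁻¹ := by linarith
    have h3 : ((r:ℚ))⁻¹ ≤ (((q:ℚ))/2)⁻¹ := by
      rw [show (((q:ℚ))/2)⁻¹ = 2 * ((q:ℚ))⁻¹ from by field_simp]
      exact h2
    have := inv_anti_le hRpos (by positivity : (0:ℚ) < (q:ℚ)/2) h3
    linarith
  have hq2rZ : q ≤ 2 * r := by exact_mod_cast hq2r
  have hD : (0:ℚ) < (q:ℚ) - (r:ℚ) := by linarith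
  have hαinv : α⁻¹ = ((q:ℚ) - (r:ℚ)) / ((r:ℚ) * (q:ℚ)) := by
    have h1 : α⁻¹ = ((r:ℚ))⁻¹ - ((q:ℚ))⁻¹ := by linarith
    rw [h1]
    field_simp
  have hαval : α = (r:ℚ) * (q:ℚ) / ((q:ℚ) - (r:ℚ)) := by
    rw [← inv_inv α, hαinv, inv_div]
  have hU2 : ((Useq r 2 : ℤ) : ℚ) = ((r:ℚ) + 1) * ((r:ℚ) * ((r:ℚ) + 1) + 1) := by
    show ((Useq r (1+1) : ℤ) : ℚ) = _
    simp only [Useq]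
    push_cast
    ring
  have key : ((r:ℚ) + 1) * ((r:ℚ) * ((r:ℚ) + 1) + 1) * ((q:ℚ) - (r:ℚ))
      - (q:ℚ) * ((r:ℚ) * (q:ℚ) + ((q:ℚ) - (r:ℚ)))
      = ((q:ℚ) - (r:ℚ) - 1) * ((r:ℚ)^3 - ((r:ℚ) + 1) * ((q:ℚ) - (r:ℚ))) := by
    ring
  have main2 : (q:ℚ) * ((r:ℚ) * (q:ℚ) + ((q:ℚ) - (r:ℚ)))
      ≤ ((r:ℚ) + 1) * ((r:ℚ) * ((r:ℚ) + 1) + 1) * ((q:ℚ) - (r:ℚ)) := by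
    rcases eq_or_lt_of_le hrqZ with hcase | hcase
    · have hq : (q:ℚ) = (r:ℚ) + 1 := by exact_mod_cast hcase.symm
      rw [hq]
      nlinarith [hRpos]
    · have hq2 : r + 2 ≤ q := by omega
      have hr2 : 2 ≤ r := by omega
      have hq2' : (r:ℚ) + 2 ≤ (q:ℚ) := by exact_mod_cast hq2
      have hr2' : (2:ℚ) ≤ (r:ℚ) := by exact_mod_cast hr2
      have f1 : (0:ℚ) ≤ (q:ℚ) - (r:ℚ) - 1 := by linarith
      have h5 : ((r:ℚ) + 1) * ((q:ℚ) - (r:ℚ)) ≤ ((r:ℚ) + 1) * (r:ℚ) := by nlinarith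
      have h6 : (r:ℚ)^2 ≥ 2 * (r:ℚ) := by nlinarith
      have h7 : (r:ℚ)^3 ≥ 2 * (r:ℚ)^2 := by nlinarith
      have f2 : (0:ℚ) ≤ (r:ℚ)^3 - ((r:ℚ) + 1) * ((q:ℚ) - (r:ℚ)) := by nlinarith
      nlinarith [mul_nonneg f1 f2]
  have hα1 : α + 1 = ((r:ℚ) * (q:ℚ) + ((q:ℚ) - (r:ℚ))) / ((q:ℚ) - (r:ℚ)) := by
    rw [hαval]
    field_simp
  calc (q:ℚ) * (α + 1)
      = ((q:ℚ) * ((r:ℚ) * (q:ℚ) + ((q:ℚ) - (r:ℚ)))) / ((q:ℚ) - (r:ℚ)) := by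
        rw [hα1]; ring
    _ ≤ (((r:ℚ) + 1) * ((r:ℚ) * ((r:ℚ) + 1) + 1) * ((q:ℚ) - (r:ℚ))) / ((q:ℚ) - (r:ℚ)) := by
        exact (div_le_div_iff_of_pos_right hD).mpr main2
    _ = ((r:ℚ) + 1) * ((r:ℚ) * ((r:ℚ) + 1) + 1) := by
        field_simp
    _ = ((Useq r 2 : ℤ) : ℚ) := hU2.symm
private lemma T1_final {rq P U alpha : ℚ} (hr : 1 ≤ rq) (hP : 0 < P) (hPU : P ≤ U)
    (hα : alpha ≤ rq * P) : P * (alpha + 1) ≤ U * (rq * U + 1) := by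
  have hU : 0 < U := lt_of_lt_of_le hP hPU
  have h1 : P * alpha ≤ P * (rq * P) := mul_le_mul_of_nonneg_left hα hP.le
  have h2 : P * P ≤ U * U := mul_le_mul hPU hPU hP.le hU.le
  have h3 : rq * (P * P) ≤ rq * (U * U) :=
    mul_le_mul_of_nonneg_left h2 (by linarith : (0:ℚ) ≤ rq)
  nlinarith [h1, h3, hPU]

private lemma T2_final {rq c Qt U alpha : ℚ} (hr : 1 ≤ rq) (hc : 3 ≤ c) (hQt : 1 ≤ Qt)
    (hU : 0 < U) (hY : (c ^ 2 - 1) * Qt ≤ U) (hα : alpha ≤ rq * c * Qt) :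
    c * (c * Qt) * (alpha + 1) ≤ U * (rq * U + 1) := by
  have hQtpos : (0:ℚ) < Qt := lt_of_lt_of_le one_pos hQt
  have h0 : (0:ℚ) ≤ c ^ 2 - c - 2 := by nlinarith
  have hpoly : (1:ℚ) ≤ (c ^ 2 - 1) ^ 2 - c ^ 3 := by
    nlinarith [mul_nonneg (sq_nonneg c) h0]
  have hfac : (1:ℚ) ≤ rq * Qt * ((c ^ 2 - 1) ^ 2 - c ^ 3) := by
    have h10 : (1:ℚ) ≤ rq * Qt := by nlinarith
    nlinarith
  have key1 : rq * c ^ 3 * Qt ^ 2 + c ^ 2 * Qt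
      ≤ rq * ((c ^ 2 - 1) * Qt) ^ 2 + (c ^ 2 - 1) * Qt := by
    nlinarith [mul_nonneg hQtpos.le
      (by linarith : (0:ℚ) ≤ rq * Qt * ((c ^ 2 - 1) ^ 2 - c ^ 3) - 1)]
  have hYpos : (0:ℚ) ≤ (c ^ 2 - 1) * Qt := by nlinarith
  have key2 : rq * ((c ^ 2 - 1) * Qt) ^ 2 + (c ^ 2 - 1) * Qt ≤ rq * U ^ 2 + U := by
    have h2 : ((c ^ 2 - 1) * Qt) * ((c ^ 2 - 1) * Qt) ≤ U * U :=
      mul_le_mul hY hY hYpos hU.le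
    nlinarith [mul_le_mul_of_nonneg_left h2 (by linarith : (0:ℚ) ≤ rq)]
  have hstep : c * (c * Qt) * (alpha + 1) ≤ rq * c ^ 3 * Qt ^ 2 + c ^ 2 * Qt := by
    have h11 : alpha + 1 ≤ rq * c * Qt + 1 := by linarith
    have h12 : (0:ℚ) ≤ c * (c * Qt) := by positivity
    calc c * (c * Qt) * (alpha + 1) ≤ c * (c * Qt) * (rq * c * Qt + 1) :=
          mul_le_mul_of_nonneg_left h11 h12
      _ = rq * c ^ 3 * Qt ^ 2 + c ^ 2 * Qt := by ring
  calc c * (c * Qt) * (alpha + 1)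
      ≤ rq * c ^ 3 * Qt ^ 2 + c ^ 2 * Qt := hstep
    _ ≤ rq * ((c ^ 2 - 1) * Qt) ^ 2 + (c ^ 2 - 1) * Qt := key1
    _ ≤ rq * U ^ 2 + U := key2
    _ = U * (rq * U + 1) := by ring

private lemma main (r : ℤ) (hr : 1 ≤ r) :
    ∀ n : ℕ, ∀ s : Multiset ℤ, ∀ α : ℚ,
    s ≠ 0 →
    (∀ x ∈ s, (1:ℤ) ≤ x) →
    (∀ x ∈ s, (x:ℚ) ≤ α) →
    0 < α →
    ((s.map fun x : ℤ => ((x:ℚ))⁻¹).sum + α⁻¹ = ((r:ℚ))⁻¹) →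
    s.sum ≤ (n : ℤ) →
    ((s.prod : ℤ) : ℚ) * (α + 1) ≤ ((Useq r (s.card + 1) : ℤ) : ℚ) := by
  intro n
  induction n using Nat.strong_induction_on with
  | _ n IH =>
  intro s α hs0 h1 hmax hα heq hsum
  have hrq : (0:ℚ) < (r:ℚ) := by exact_mod_cast lt_of_lt_of_le one_pos hr
  have hrq1 : (1:ℚ) ≤ (r:ℚ) := by exact_mod_cast hr
  by_cases hk1 : s.card = 1
  · -- base case k = 1
    obtain ⟨q, rfl⟩ := Multiset.card_eq_one.mp hk1
    have hq1 : (1:ℤ) ≤ q := h1 q (Multiset.mem_singleton_self q)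
    have hqα : (q:ℚ) ≤ α := hmax q (Multiset.mem_singleton_self q)
    have heq' : ((q:ℚ))⁻¹ + α⁻¹ = ((r:ℚ))⁻¹ := by
      simpa using heq
    have := base_case r hr q hq1 α hα hqα heq'
    simpa using this
  · -- k ≥ 2
    have hkpos : 0 < s.card := Multiset.card_pos.mpr hs0
    have hk2 : 2 ≤ s.card := by omega
    have hn1 : 1 ≤ n := by
      have hcs := ms_card_le_sum s h1
      have h2 : (2:ℤ) ≤ (s.card : ℤ) := by exact_mod_cast hk2
      have : (2:ℤ) ≤ (n:ℤ) := le_trans h2 (le_trans hcs hsum)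
      exact_mod_cast le_trans (by norm_num : (1:ℤ) ≤ 2) this
    by_cases hE : ∃ x ∈ s, α < (x:ℚ) * ((x:ℚ) - 1)
    · -- move (E): decrement such a part
      obtain ⟨x, hxs, hxα⟩ := hE
      have hx1 : (1:ℤ) ≤ x := h1 x hxs
      have hxq : (x:ℚ) ≤ α := hmax x hxs
      have hxpos : (0:ℚ) < (x:ℚ) := by exact_mod_cast lt_of_lt_of_le one_pos hx1
      have hx3 : (3:ℤ) ≤ x := by
        have h2 : (x:ℚ) < (x:ℚ) * ((x:ℚ) - 1) := lt_of_le_of_lt hxq hxα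
        have h3 : (2:ℚ) < (x:ℚ) := by nlinarith
        have : (2:ℤ) < x := by exact_mod_cast h3
        omega
      have hx3q : (3:ℚ) ≤ (x:ℚ) := by exact_mod_cast hx3
      set t := s.erase x with ht
      have hst : s = x ::ₘ t := (Multiset.cons_erase hxs).symm
      have hXpos : (0:ℚ) < (x:ℚ) * ((x:ℚ) - 1) := by nlinarith
      have hβpos : 0 < α⁻¹ - ((x:ℚ) * ((x:ℚ) - 1))⁻¹ :=
        sub_pos.mpr (inv_lt_inv_of_lt' hα hxα)
      set α' := (α⁻¹ - ((x:ℚ) * ((x:ℚ) - 1))⁻¹)⁻¹ with hα'def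
      have hα'pos : 0 < α' := inv_pos.mpr hβpos
      have hα'inv : α'⁻¹ = α⁻¹ - ((x:ℚ) * ((x:ℚ) - 1))⁻¹ := by
        rw [hα'def, inv_inv]
      have hαα' : α ≤ α' := by
        apply inv_anti_le hα'pos hα
        rw [hα'inv]
        have : 0 < ((x:ℚ) * ((x:ℚ) - 1))⁻¹ := by positivity
        linarith
      -- rewritten equation
      have heqc : ((x:ℚ))⁻¹ + ((t.map fun y : ℤ => ((y:ℚ))⁻¹).sum + α⁻¹) = ((r:ℚ))⁻¹ := by
        rw [hst] at heq
        simpa [Multiset.map_cons, Multiset.sum_cons, add_assoc] using heq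
      have hid : ((x:ℚ) - 1)⁻¹ - ((x:ℚ) * ((x:ℚ) - 1))⁻¹ = ((x:ℚ))⁻¹ := by
        have hne1 : (x:ℚ) - 1 ≠ 0 := by
          have : (1:ℚ) < (x:ℚ) := by linarith
          intro hcon; nlinarith [hcon]
        field_simp
      have ht1 : ∀ y ∈ t, (1:ℤ) ≤ y := fun y hy => h1 y (Multiset.mem_of_mem_erase hy)
      -- hypotheses for the new instance
      have heq2 : (((x - 1) ::ₘ t).map fun y : ℤ => ((y:ℚ))⁻¹).sum + α'⁻¹ = ((r:ℚ))⁻¹ := by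
        simp only [Multiset.map_cons, Multiset.sum_cons]
        rw [hα'inv]
        push_cast
        linarith [hid, heqc]
      have hsum2 : ((x - 1) ::ₘ t).sum ≤ ((n - 1 : ℕ) : ℤ) := by
        have e1 : s.sum = x + t.sum := by rw [hst, Multiset.sum_cons]
        have e2 : ((x - 1) ::ₘ t).sum = x - 1 + t.sum := by rw [Multiset.sum_cons]
        rw [e2]
        rw [Nat.cast_sub hn1]
        push_cast
        linarith [hsum, e1.symm.le, e1.le]
      have ihres := IH (n - 1) (by omega) ((x - 1) ::ₘ t) α' (Multiset.cons_ne_zero)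
        (by
          intro y hy
          rcases Multiset.mem_cons.mp hy with rfl | hy
          · omega
          · exact ht1 y hy)
        (by
          intro y hy
          rcases Multiset.mem_cons.mp hy with rfl | hy
          · push_cast
            linarith
          · exact le_trans (hmax y (hst ▸ Multiset.mem_cons_of_mem hy)) hαα')
        hα'pos heq2 hsum2
      have hcard2 : ((x - 1) ::ₘ t).card = s.card := by
        rw [hst]
        simp [Multiset.card_cons]
      rw [hcard2] at ihres
      -- transfer inequality : x (α+1) ≤ (x−1)(α'+1)
      have hkey : (x:ℚ) * (α + 1) ≤ ((x:ℚ) - 1) * (α' + 1) := by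
        have hXα : 0 < (x:ℚ) * ((x:ℚ) - 1) - α := by
          exact sub_pos.mpr hxα
        have hα'eq : α' * ((x:ℚ) * ((x:ℚ) - 1) - α) = α * ((x:ℚ) * ((x:ℚ) - 1)) := by
          rw [hα'def]
          rw [show α⁻¹ - ((x:ℚ) * ((x:ℚ) - 1))⁻¹
              = ((x:ℚ) * ((x:ℚ) - 1) - α) / (α * ((x:ℚ) * ((x:ℚ) - 1))) from by
            have hx1' : (x:ℚ) - 1 ≠ 0 := (by linarith : (0:ℚ) < (x:ℚ) - 1).ne'
            field_simp]
          rw [inv_div]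
          field_simp
        have hexp : (α' + 1) * ((x:ℚ) * ((x:ℚ) - 1) - α)
            = α * ((x:ℚ) * ((x:ℚ) - 1)) + ((x:ℚ) * ((x:ℚ) - 1) - α) := by
          rw [add_mul, hα'eq, one_mul]
        have hineq : (x:ℚ) * (α + 1) * ((x:ℚ) * ((x:ℚ) - 1) - α)
            ≤ ((x:ℚ) - 1) * (α * ((x:ℚ) * ((x:ℚ) - 1)) + ((x:ℚ) * ((x:ℚ) - 1) - α)) := by
          have hident : ((x:ℚ) - 1) * (α * ((x:ℚ) * ((x:ℚ) - 1)) + ((x:ℚ) * ((x:ℚ) - 1) - α))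
              - (x:ℚ) * (α + 1) * ((x:ℚ) * ((x:ℚ) - 1) - α)
              = α * (x:ℚ) * (α - (x:ℚ)) + (x:ℚ) * (α - (x:ℚ)) + (α + (x:ℚ)) := by
            ring
          nlinarith [mul_nonneg (mul_nonneg hα.le hxpos.le) (sub_nonneg.mpr hxq),
            mul_nonneg hxpos.le (sub_nonneg.mpr hxq)]
        calc (x:ℚ) * (α + 1)
            = ((x:ℚ) * (α + 1) * ((x:ℚ) * ((x:ℚ) - 1) - α)) / ((x:ℚ) * ((x:ℚ) - 1) - α) := by
              field_simp
          _ ≤ (((x:ℚ) - 1) * ((α' + 1) * ((x:ℚ) * ((x:ℚ) - 1) - α))) / ((x:ℚ) * ((x:ℚ) - 1) - α) := by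
              apply (div_le_div_iff_of_pos_right hXα).mpr
              rw [hexp]
              exact hineq
          _ = ((x:ℚ) - 1) * (α' + 1) := by
              rw [mul_div_assoc, mul_div_assoc, div_self hXα.ne', mul_one]
      -- conclude
      have hQt : (1:ℚ) ≤ ((t.prod : ℤ) : ℚ) := by exact_mod_cast ms_one_le_prod t ht1
      have hQtpos : (0:ℚ) < ((t.prod : ℤ) : ℚ) := lt_of_lt_of_le one_pos hQt
      have hprod1 : ((s.prod : ℤ) : ℚ) = (x:ℚ) * ((t.prod : ℤ) : ℚ) := by
        rw [hst, Multiset.prod_cons]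
        push_cast
        ring
      have hprod2 : ((((x - 1) ::ₘ t).prod : ℤ) : ℚ) = ((x:ℚ) - 1) * ((t.prod : ℤ) : ℚ) := by
        rw [Multiset.prod_cons]
        push_cast
        ring
      calc ((s.prod : ℤ) : ℚ) * (α + 1)
          = ((t.prod : ℤ) : ℚ) * ((x:ℚ) * (α + 1)) := by rw [hprod1]; ring
        _ ≤ ((t.prod : ℤ) : ℚ) * (((x:ℚ) - 1) * (α' + 1)) :=
            mul_le_mul_of_nonneg_left hkey hQtpos.le
        _ = ((((x - 1) ::ₘ t).prod : ℤ) : ℚ) * (α' + 1) := by rw [hprod2]; ring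
        _ ≤ ((Useq r (s.card + 1) : ℤ) : ℚ) := ihres
    · -- terminal case
      push_neg at hE
      obtain ⟨c, hcs, hcmax⟩ := ms_exists_max s hs0
      have hc1 : (1:ℤ) ≤ c := h1 c hcs
      have hcq : (c:ℚ) ≤ α := hmax c hcs
      have hcpos : (0:ℚ) < (c:ℚ) := by exact_mod_cast lt_of_lt_of_le one_pos hc1
      -- c ≥ r + 1
      have hcr : r + 1 ≤ c := by
        have h5 := ms_single_le_sum_inv s h1 hcs
        have hinvα : 0 < α⁻¹ := by positivity
        have h6 : ((c:ℚ))⁻¹ < ((r:ℚ))⁻¹ := by linarith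
        have h7 := inv_anti_lt hcpos hrq h6
        have : r < c := by exact_mod_cast h7
        omega
      have hc2 : 2 ≤ c := by omega
      have hcm1pos : (0:ℚ) < (c:ℚ) - 1 := by
        have : (2:ℚ) ≤ (c:ℚ) := by exact_mod_cast hc2
        linarith
      have hXpos : (0:ℚ) < (c:ℚ) * ((c:ℚ) - 1) := by positivity
      have hterm : (c:ℚ) * ((c:ℚ) - 1) ≤ α := hE c hcs
      by_cases hcc : 2 ≤ s.count c
      · -- (T2) : duplicated maximum
        have hc_in_erase : c ∈ s.erase c := by
          apply Multiset.count_pos.mp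
          have := Multiset.count_erase_self c s
          omega
        set t := (s.erase c).erase c with htdef
        have hst : s = c ::ₘ c ::ₘ t := by
          rw [htdef, Multiset.cons_erase hc_in_erase, Multiset.cons_erase hcs]
        have ht1 : ∀ y ∈ t, (1:ℤ) ≤ y := fun y hy =>
          h1 y (Multiset.mem_of_mem_erase (Multiset.mem_of_mem_erase hy))
        have htle : ∀ y ∈ t, y ≤ c := fun y hy =>
          hcmax y (Multiset.mem_of_mem_erase (Multiset.mem_of_mem_erase hy))
        have heqc : ((c:ℚ))⁻¹ + (((c:ℚ))⁻¹ + ((t.map fun y : ℤ => ((y:ℚ))⁻¹).sum + α⁻¹))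
            = ((r:ℚ))⁻¹ := by
          rw [hst] at heq
          simpa [Multiset.map_cons, Multiset.sum_cons, add_assoc] using heq
        have hSt := ms_sum_inv_nonneg t ht1
        have hinvα : 0 < α⁻¹ := by positivity
        -- c > 2r
        have hc2r : 2 * r < c := by
          have h6 : 2 * ((c:ℚ))⁻¹ < ((r:ℚ))⁻¹ := by linarith
          have h7 : ((c:ℚ))⁻¹ < ((2:ℚ) * (r:ℚ))⁻¹ := by
            rw [mul_inv]
            have h8 : ((2:ℚ))⁻¹ * ((r:ℚ))⁻¹ = ((r:ℚ))⁻¹ / 2 := by ring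
            rw [h8]
            linarith
          have h9 := inv_anti_lt hcpos (by positivity : (0:ℚ) < (2:ℚ) * (r:ℚ)) h7
          exact_mod_cast h9
        have hc3 : 3 ≤ c := by omega
        have hc3q : (3:ℚ) ≤ (c:ℚ) := by exact_mod_cast hc3
        -- the folded alpha
        set g : ℚ := ((c:ℚ) - 2) / ((c:ℚ) * ((c:ℚ) - 1)) with hgdef
        have hg0 : 0 ≤ g := by
          apply div_nonneg _ hXpos.le
          linarith
        have hα2invpos : 0 < α⁻¹ + g := by positivity
        set α2 := (α⁻¹ + g)⁻¹ with hα2def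
        have hα2pos : 0 < α2 := inv_pos.mpr hα2invpos
        have hα2inv : α2⁻¹ = α⁻¹ + g := by rw [hα2def, inv_inv]
        have hα2c : (c:ℚ) ≤ α2 := by
          apply inv_anti_le hα2pos hcpos
          rw [hα2inv]
          have hαX : α⁻¹ ≤ ((c:ℚ) * ((c:ℚ) - 1))⁻¹ := inv_le_inv_of_le' hα hXpos hterm
          have hid : ((c:ℚ) * ((c:ℚ) - 1))⁻¹ + g = ((c:ℚ))⁻¹ := by
            rw [hgdef]
            field_simp
            try ring
          linarith
        have hid2 : ((c:ℚ) - 1)⁻¹ + g = 2 * ((c:ℚ))⁻¹ := by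
          rw [hgdef]
          field_simp
          ring
        have heq2 : (((c - 1) ::ₘ t).map fun y : ℤ => ((y:ℚ))⁻¹).sum + α2⁻¹ = ((r:ℚ))⁻¹ := by
          simp only [Multiset.map_cons, Multiset.sum_cons]
          rw [hα2inv]
          push_cast
          linarith
        have hsum2 : ((c - 1) ::ₘ t).sum ≤ ((n - 1 : ℕ) : ℤ) := by
          have e1 : s.sum = c + (c + t.sum) := by rw [hst]; simp [Multiset.sum_cons]
          have e2 : ((c - 1) ::ₘ t).sum = c - 1 + t.sum := by rw [Multiset.sum_cons]
          rw [e2, Nat.cast_sub hn1]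
          push_cast
          linarith
        have ihres := IH (n - 1) (by omega) ((c - 1) ::ₘ t) α2 (Multiset.cons_ne_zero)
          (by
            intro y hy
            rcases Multiset.mem_cons.mp hy with rfl | hy
            · omega
            · exact ht1 y hy)
          (by
            intro y hy
            rcases Multiset.mem_cons.mp hy with rfl | hy
            · push_cast
              linarith
            · have := htle y hy
              have hyq : (y:ℚ) ≤ (c:ℚ) := by exact_mod_cast this
              linarith)
          hα2pos heq2 hsum2
        have hcardt : ((c - 1) ::ₘ t).card + 1 = s.card := by
          have e1 := Multiset.card_erase_of_mem hcs
          have e2 := Multiset.card_erase_of_mem hc_in_erase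
          rw [Nat.pred_eq_sub_one] at e1 e2
          rw [← htdef] at e2
          simp only [Multiset.card_cons]
          omega
        rw [hcardt] at ihres
        -- abbreviations
        have hQt : (1:ℚ) ≤ ((t.prod : ℤ) : ℚ) := by exact_mod_cast ms_one_le_prod t ht1
        have hQtpos : (0:ℚ) < ((t.prod : ℤ) : ℚ) := lt_of_lt_of_le one_pos hQt
        have hUpos : (0:ℚ) < ((Useq r s.card : ℤ) : ℚ) := by
          exact_mod_cast lt_of_lt_of_le one_pos (by exact_mod_cast Useq_one_le r hr s.card)
        have hprodn : ((((c - 1) ::ₘ t).prod : ℤ) : ℚ) = ((c:ℚ) - 1) * ((t.prod : ℤ) : ℚ) := by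
          rw [Multiset.prod_cons]
          push_cast
          ring
        rw [hprodn] at ihres
        -- (c²−1) Qt ≤ U
        have hY : ((c:ℚ) ^ 2 - 1) * ((t.prod : ℤ) : ℚ) ≤ ((Useq r s.card : ℤ) : ℚ) := by
          have h8 : (c:ℚ) + 1 ≤ α2 + 1 := by linarith
          have h9 : (0:ℚ) ≤ ((c:ℚ) - 1) * ((t.prod : ℤ) : ℚ) := by positivity
          calc ((c:ℚ) ^ 2 - 1) * ((t.prod : ℤ) : ℚ)
              = (((c:ℚ) - 1) * ((t.prod : ℤ) : ℚ)) * ((c:ℚ) + 1) := by ring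
            _ ≤ (((c:ℚ) - 1) * ((t.prod : ℤ) : ℚ)) * (α2 + 1) :=
                mul_le_mul_of_nonneg_left h8 h9
            _ ≤ ((Useq r s.card : ℤ) : ℚ) := ihres
        -- sharp denominator bound
        have heqc' : ((c:ℚ))⁻¹ + ((c:ℚ))⁻¹ + (t.map fun y : ℤ => ((y:ℚ))⁻¹).sum + α⁻¹
            = ((r:ℚ))⁻¹ := by linarith
        have hαrcP := alpha_le_rcP r c hr hc1 t α ht1 hα heqc'
        -- final computation
        have hprodc : ((s.prod : ℤ) : ℚ) = (c:ℚ) * ((c:ℚ) * ((t.prod : ℤ) : ℚ)) := by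
          rw [hst]
          simp only [Multiset.prod_cons]
          push_cast
          ring
        have hUdef : ((Useq r (s.card + 1) : ℤ) : ℚ)
            = ((Useq r s.card : ℤ) : ℚ) * ((r:ℚ) * ((Useq r s.card : ℤ) : ℚ) + 1) := by
          show ((Useq r (s.card + 1) : ℤ) : ℚ) = _
          simp only [Useq]
          push_cast
          ring
        rw [hprodc, hUdef]
        exact T2_final hrq1 hc3q hQt hUpos hY hαrcP
      · -- (T1) : unique maximum, fold it into α
        have hcount1 : s.count c = 1 := by
          have := Multiset.one_le_count_iff_mem.mpr hcs
          omega
        set t := s.erase c with htdef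
        have hst : s = c ::ₘ t := (Multiset.cons_erase hcs).symm
        have ht1 : ∀ y ∈ t, (1:ℤ) ≤ y := fun y hy => h1 y (Multiset.mem_of_mem_erase hy)
        have hcnotint : c ∉ t := by
          rw [htdef]
          intro hmem
          have hce := Multiset.count_erase_self c s
          have := Multiset.count_pos.mpr hmem
          omega
        have htle : ∀ y ∈ t, y ≤ c - 1 := by
          intro y hy
          have h5 := hcmax y (Multiset.mem_of_mem_erase hy)
          have h6 : y ≠ c := fun hcon => hcnotint (hcon ▸ hy)
          omega
        have ht0 : t ≠ 0 := by
          have hcard := Multiset.card_erase_of_mem hcs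
          rw [Nat.pred_eq_sub_one] at hcard
          rw [← htdef] at hcard
          intro hcon
          rw [hcon] at hcard
          simp at hcard
          omega
        have hα2invpos : 0 < ((c:ℚ))⁻¹ + α⁻¹ := by positivity
        set α2 := (((c:ℚ))⁻¹ + α⁻¹)⁻¹ with hα2def
        have hα2pos : 0 < α2 := inv_pos.mpr hα2invpos
        have hα2inv : α2⁻¹ = ((c:ℚ))⁻¹ + α⁻¹ := by rw [hα2def, inv_inv]
        have hα2c : (c:ℚ) - 1 ≤ α2 := by
          apply inv_anti_le hα2pos hcm1pos
          rw [hα2inv]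
          have hid : ((c:ℚ))⁻¹ + ((c:ℚ) * ((c:ℚ) - 1))⁻¹ = ((c:ℚ) - 1)⁻¹ := by
            field_simp
            try ring
          have hαX : α⁻¹ ≤ ((c:ℚ) * ((c:ℚ) - 1))⁻¹ := inv_le_inv_of_le' hα hXpos hterm
          linarith
        have heqc : ((c:ℚ))⁻¹ + ((t.map fun y : ℤ => ((y:ℚ))⁻¹).sum + α⁻¹) = ((r:ℚ))⁻¹ := by
          rw [hst] at heq
          simpa [Multiset.map_cons, Multiset.sum_cons, add_assoc] using heq
        have heq2 : (t.map fun y : ℤ => ((y:ℚ))⁻¹).sum + α2⁻¹ = ((r:ℚ))⁻¹ := by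
          rw [hα2inv]
          linarith
        have hsum2 : t.sum ≤ ((n - 1 : ℕ) : ℤ) := by
          have e1 : s.sum = c + t.sum := by rw [hst, Multiset.sum_cons]
          rw [Nat.cast_sub hn1]
          push_cast
          linarith
        have ihres := IH (n - 1) (by omega) t α2 ht0 ht1
          (by
            intro y hy
            have h5 := htle y hy
            have h6 : (y:ℚ) ≤ (c:ℚ) - 1 := by
              have : ((y:ℤ):ℚ) ≤ ((c - 1 : ℤ):ℚ) := by exact_mod_cast h5
              push_cast at this
              linarith
            linarith)
          hα2pos heq2 hsum2
        have hcardt : t.card + 1 = s.card := by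
          have e1 := Multiset.card_erase_of_mem hcs
          rw [Nat.pred_eq_sub_one] at e1
          rw [← htdef] at e1
          omega
        rw [hcardt] at ihres
        -- abbreviations and final chain
        have hQt : (1:ℚ) ≤ ((t.prod : ℤ) : ℚ) := by exact_mod_cast ms_one_le_prod t ht1
        have hQtpos : (0:ℚ) < ((t.prod : ℤ) : ℚ) := lt_of_lt_of_le one_pos hQt
        have hUpos : (0:ℚ) < ((Useq r s.card : ℤ) : ℚ) := by
          exact_mod_cast lt_of_lt_of_le one_pos (by exact_mod_cast Useq_one_le r hr s.card)
        have hcP : (c:ℚ) * ((t.prod : ℤ) : ℚ) ≤ ((Useq r s.card : ℤ) : ℚ) := by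
          have h8 : (c:ℚ) ≤ α2 + 1 := by linarith
          calc (c:ℚ) * ((t.prod : ℤ) : ℚ)
              ≤ (α2 + 1) * ((t.prod : ℤ) : ℚ) :=
                mul_le_mul_of_nonneg_right h8 hQtpos.le
            _ = ((t.prod : ℤ) : ℚ) * (α2 + 1) := by ring
            _ ≤ ((Useq r s.card : ℤ) : ℚ) := ihres
        have hαrP := alpha_le_rP r hr s α h1 hα heq
        have hprodc : ((s.prod : ℤ) : ℚ) = (c:ℚ) * ((t.prod : ℤ) : ℚ) := by
          rw [hst, Multiset.prod_cons]
          push_cast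
          ring
        have hUdef : ((Useq r (s.card + 1) : ℤ) : ℚ)
            = ((Useq r s.card : ℤ) : ℚ) * ((r:ℚ) * ((Useq r s.card : ℤ) : ℚ) + 1) := by
          show ((Useq r (s.card + 1) : ℤ) : ℚ) = _
          simp only [Useq]
          push_cast
          ring
        have hPpos : (0:ℚ) < (c:ℚ) * ((t.prod : ℤ) : ℚ) := by positivity
        rw [hprodc, hUdef]
        rw [hprodc] at hαrP
        exact T1_final hrq1 hPpos hcP hαrP
private lemma quad_mono {a m : ℚ} (ha : 0 < a) (hm : 0 < m) (h : a * (a + 1) ≤ m * (m + 1)) :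
    a ≤ m := by nlinarith


/-- **Proposition 3.1, Erdős-type bound.** If positive integers
`p_1, …, p_k` and a positive rational `α ≥ max p_i` satisfy
`∑ 1/p_i + 1/α = 1/r`, then `α ≤ u_{k+1}(r) - 1` and
`p_1 ⋯ p_k (α + 1) ≤ u_1(r) ⋯ u_{k+1}(r)`, where `u_1(r) = r + 1` and
`u_{n+1}(r) = r u_1(r) ⋯ u_n(r) + 1`. -/
theorem kellogg_type_bound
    (r : ℤ) (hr : 1 ≤ r)
    (u : ℕ → ℤ) (hu1 : u 1 = r + 1)
    (hu : ∀ j, 1 ≤ j → u (j + 1) = r * (∏ i ∈ Finset.Icc 1 j, u i) + 1)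
    (k : ℕ) (hk : 1 ≤ k)
    (p : Fin k → ℤ) (hp : ∀ i, 0 < p i)
    (α : ℚ) (hα : 0 < α)
    (heq : (∑ i, ((p i : ℚ))⁻¹) + α⁻¹ = (r : ℚ)⁻¹)
    (hmax : ∀ i, (p i : ℚ) ≤ α) :
    α ≤ (u (k + 1) : ℚ) - 1 ∧
      (∏ i, (p i : ℚ)) * (α + 1) ≤ ∏ i ∈ Finset.Icc 1 (k + 1), (u i : ℚ) := by
  -- bridge between u and Useq
  have hbridge : ∀ j : ℕ, (∏ i ∈ Finset.Icc 1 j, u i) = Useq r j := by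
    intro j
    induction j with
    | zero => simp [Useq]
    | succ j ih =>
      rw [Finset.prod_Icc_succ_top (by omega : 1 ≤ j + 1)]
      rcases Nat.eq_zero_or_pos j with rfl | hj
      · simp only [show (0:ℕ) + 1 = 1 from rfl, hu1]
        simp [Useq]
      · rw [hu j hj, ih]
        show _ = Useq r (j + 1)
        simp only [Useq]
        try ring
  -- the multiset of the parts
  set s : Multiset ℤ := Finset.univ.val.map p with hsdef
  have hscard : s.card = k := by
    rw [hsdef, Multiset.card_map]
    simp
  have hs0 : s ≠ 0 := by
    intro hcon
    rw [hcon] at hscard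
    simp at hscard
    omega
  have hmem : ∀ x ∈ s, ∃ i : Fin k, p i = x := by
    intro x hx
    rw [hsdef] at hx
    obtain ⟨i, _, hi⟩ := Multiset.mem_map.mp hx
    exact ⟨i, hi⟩
  have h1 : ∀ x ∈ s, (1:ℤ) ≤ x := by
    intro x hx
    obtain ⟨i, rfl⟩ := hmem x hx
    exact hp i
  have hmax' : ∀ x ∈ s, (x:ℚ) ≤ α := by
    intro x hx
    obtain ⟨i, rfl⟩ := hmem x hx
    exact hmax i
  -- sums and products over the multiset
  have hsum_eq : (s.map fun x : ℤ => ((x:ℚ))⁻¹).sum = ∑ i, ((p i : ℚ))⁻¹ := by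
    rw [hsdef, Multiset.map_map]
    rfl
  have hprod_eq : ((s.prod : ℤ) : ℚ) = ∏ i, (p i : ℚ) := by
    rw [hsdef]
    rw [show (Finset.univ.val.map p).prod = ∏ i, p i from rfl]
    push_cast
    rfl
  have heq' : (s.map fun x : ℤ => ((x:ℚ))⁻¹).sum + α⁻¹ = ((r:ℚ))⁻¹ := by
    rw [hsum_eq]; exact heq
  -- apply the main lemma
  have hG2 := main r hr s.sum.toNat s α hs0 h1 hmax' hα heq' (Int.self_le_toNat s.sum)
  rw [hscard] at hG2
  -- conclusion 2
  have hu_prod : (∏ i ∈ Finset.Icc 1 (k + 1), (u i : ℚ))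
      = ((Useq r (k + 1) : ℤ) : ℚ) := by
    rw [← hbridge (k + 1)]
    push_cast
    rfl
  have hconc2 : (∏ i, (p i : ℚ)) * (α + 1) ≤ ∏ i ∈ Finset.Icc 1 (k + 1), (u i : ℚ) := by
    rw [hu_prod, ← hprod_eq]
    exact hG2
  refine ⟨?_, hconc2⟩
  -- conclusion 1
  have hαrP := alpha_le_rP r hr s α h1 hα heq'
  have hPpos : (0:ℚ) < ((s.prod : ℤ) : ℚ) := by
    exact_mod_cast lt_of_lt_of_le one_pos (by exact_mod_cast ms_one_le_prod s h1)
  have hrq : (0:ℚ) < (r:ℚ) := by exact_mod_cast lt_of_lt_of_le one_pos hr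
  have hUpos : (0:ℚ) < ((Useq r k : ℤ) : ℚ) := by
    exact_mod_cast lt_of_lt_of_le one_pos (by exact_mod_cast Useq_one_le r hr k)
  have hUk1 : ((Useq r (k + 1) : ℤ) : ℚ)
      = ((Useq r k : ℤ) : ℚ) * ((r:ℚ) * ((Useq r k : ℤ) : ℚ) + 1) := by
    show ((Useq r (k + 1) : ℤ) : ℚ) = _
    simp only [Useq]
    push_cast
    ring
  have hquad : α * (α + 1) ≤ ((r:ℚ) * ((Useq r k : ℤ) : ℚ))
      * ((r:ℚ) * ((Useq r k : ℤ) : ℚ) + 1) := by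
    have h1' : α * (α + 1) ≤ ((r:ℚ) * ((s.prod : ℤ) : ℚ)) * (α + 1) :=
      mul_le_mul_of_nonneg_right hαrP (by linarith)
    have h2' : ((r:ℚ) * ((s.prod : ℤ) : ℚ)) * (α + 1)
        = (r:ℚ) * (((s.prod : ℤ) : ℚ) * (α + 1)) := by ring
    have h3' : (r:ℚ) * (((s.prod : ℤ) : ℚ) * (α + 1))
        ≤ (r:ℚ) * ((Useq r (k + 1) : ℤ) : ℚ) :=
      mul_le_mul_of_nonneg_left hG2 hrq.le
    calc α * (α + 1) ≤ (r:ℚ) * ((Useq r (k + 1) : ℤ) : ℚ) := by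
          linarith [h1', h2', h3']
      _ = ((r:ℚ) * ((Useq r k : ℤ) : ℚ)) * ((r:ℚ) * ((Useq r k : ℤ) : ℚ) + 1) := by
          rw [hUk1]; ring
  have hαle : α ≤ (r:ℚ) * ((Useq r k : ℤ) : ℚ) :=
    quad_mono hα (by positivity) hquad
  have huk1 : (u (k + 1) : ℚ) = (r:ℚ) * ((Useq r k : ℤ) : ℚ) + 1 := by
    rw [hu k hk, hbridge k]
    push_cast
    ring
  rw [huk1]
  linarith
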